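/- Let X₁, X₂, X₃ be normed vector spaces over ℝ and let H₁ : S → X₁, H₂ : S → X₂, H₃ : S → X₃ be bounded functions on a set S, with sup-norm distance on functions. Define d(Hᵢ, Hⱼ) = max( inf over linear maps A with operator norm ≤ 1 of sup_{s∈S} ‖A (Hᵢ s) − Hⱼ s‖, inf over linear maps B with operator norm ≤ 1 of sup_{s∈S} ‖Hᵢ s − B (Hⱼ s)‖ ). Then d satisfies the triangle inequality: d(H₁, H₃) ≤ d(H₁, H₂) + d(H₂, H₃). -/
import Mathlib


open scoped BigOperators

/-- Bidirectional linear-approximation "representation similarity" distance: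
`max` of the infimum over operator-norm-≤1 linear encoders of the sup-norm error,
and the analogous infimum over decoders. -/
noncomputable def dRepr {S : Type*} {X Y : Type*}
    [NormedAddCommGroup X] [NormedSpace ℝ X]
    [NormedAddCommGroup Y] [NormedSpace ℝ Y]
    (H₁ : S → X) (H₂ : S → Y) : ℝ :=
  max (⨅ A : {A : X →L[ℝ] Y // ‖A‖ ≤ 1}, ⨆ s : S, ‖A.1 (H₁ s) - H₂ s‖)
      (⨅ B : {B : Y →L[ℝ] X // ‖B‖ ≤ 1}, ⨆ s : S, ‖H₁ s - B.1 (H₂ s)‖)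

instance dRepr_nonempty_aux {X Y : Type*} [NormedAddCommGroup X] [NormedSpace ℝ X]
    [NormedAddCommGroup Y] [NormedSpace ℝ Y] :
    Nonempty {A : X →L[ℝ] Y // ‖A‖ ≤ 1} :=
  ⟨⟨0, by simp⟩⟩

lemma dRepr_bddAbove_aux {S X Y : Type*} [NormedAddCommGroup X] [NormedSpace ℝ X]
    [NormedAddCommGroup Y] [NormedSpace ℝ Y]
    {H₁ : S → X} {H₂ : S → Y} {C₁ C₂ : ℝ}
    (h₁ : ∀ s, ‖H₁ s‖ ≤ C₁) (h₂ : ∀ s, ‖H₂ s‖ ≤ C₂)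
    (A : {A : X →L[ℝ] Y // ‖A‖ ≤ 1}) :
    BddAbove (Set.range fun s => ‖A.1 (H₁ s) - H₂ s‖) := by
  refine ⟨C₁ + C₂, ?_⟩
  rintro _ ⟨s, rfl⟩
  have h := A.1.le_opNorm (H₁ s)
  have h0 : (0:ℝ) ≤ ‖H₁ s‖ := norm_nonneg _
  calc ‖A.1 (H₁ s) - H₂ s‖ ≤ ‖A.1 (H₁ s)‖ + ‖H₂ s‖ := norm_sub_le _ _
    _ ≤ C₁ + C₂ := by nlinarith [A.2, h₂ s, h₁ s, norm_nonneg (A.1 (H₁ s))]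

lemma dRepr_key {S X Y Z : Type*} [NormedAddCommGroup X] [NormedSpace ℝ X]
    [NormedAddCommGroup Y] [NormedSpace ℝ Y]
    [NormedAddCommGroup Z] [NormedSpace ℝ Z]
    (H₁ : S → X) (H₂ : S → Y) (H₃ : S → Z)
    (hb₁ : ∃ C, ∀ s, ‖H₁ s‖ ≤ C) (hb₂ : ∃ C, ∀ s, ‖H₂ s‖ ≤ C)
    (hb₃ : ∃ C, ∀ s, ‖H₃ s‖ ≤ C) :
    (⨅ A : {A : X →L[ℝ] Z // ‖A‖ ≤ 1}, ⨆ s : S, ‖A.1 (H₁ s) - H₃ s‖) ≤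
      (⨅ A : {A : X →L[ℝ] Y // ‖A‖ ≤ 1}, ⨆ s : S, ‖A.1 (H₁ s) - H₂ s‖) +
      (⨅ A : {A : Y →L[ℝ] Z // ‖A‖ ≤ 1}, ⨆ s : S, ‖A.1 (H₂ s) - H₃ s‖) := by
  obtain ⟨C₁, h₁⟩ := hb₁
  obtain ⟨C₂, h₂⟩ := hb₂
  obtain ⟨C₃, h₃⟩ := hb₃
  set g : {A : X →L[ℝ] Y // ‖A‖ ≤ 1} → ℝ := fun A => ⨆ s : S, ‖A.1 (H₁ s) - H₂ s‖ with hg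
  set h : {A : Y →L[ℝ] Z // ‖A‖ ≤ 1} → ℝ := fun A => ⨆ s : S, ‖A.1 (H₂ s) - H₃ s‖ with hh
  set F : ℝ := ⨅ A : {A : X →L[ℝ] Z // ‖A‖ ≤ 1}, ⨆ s : S, ‖A.1 (H₁ s) - H₃ s‖ with hF
  have hnng : ∀ A, 0 ≤ g A := fun A => Real.iSup_nonneg fun s => norm_nonneg _
  have hnnh : ∀ A, 0 ≤ h A := fun A => Real.iSup_nonneg fun s => norm_nonneg _
  have hbb : BddBelow (Set.range fun A : {A : X →L[ℝ] Z // ‖A‖ ≤ 1} =>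
      ⨆ s : S, ‖A.1 (H₁ s) - H₃ s‖) := by
    refine ⟨0, ?_⟩
    rintro _ ⟨A, rfl⟩
    exact Real.iSup_nonneg fun s => norm_nonneg _
  have main : ∀ (A : {A : X →L[ℝ] Y // ‖A‖ ≤ 1}) (A' : {A : Y →L[ℝ] Z // ‖A‖ ≤ 1}),
      F ≤ g A + h A' := by
    intro A A'
    have hcomp : ‖A'.1.comp A.1‖ ≤ 1 := by
      refine le_trans (ContinuousLinearMap.opNorm_comp_le _ _) ?_
      nlinarith [A.2, A'.2, norm_nonneg A.1, norm_nonneg A'.1]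
    refine le_trans (ciInf_le hbb ⟨A'.1.comp A.1, hcomp⟩) ?_
    refine Real.iSup_le (fun s => ?_) (add_nonneg (hnng A) (hnnh A'))
    have tri : ‖A'.1 (A.1 (H₁ s)) - H₃ s‖ ≤
        ‖A'.1 (A.1 (H₁ s)) - A'.1 (H₂ s)‖ + ‖A'.1 (H₂ s) - H₃ s‖ := by
      have := dist_triangle (A'.1 (A.1 (H₁ s))) (A'.1 (H₂ s)) (H₃ s)
      simpa [dist_eq_norm] using this
    have step1 : ‖A'.1 (A.1 (H₁ s)) - A'.1 (H₂ s)‖ ≤ ‖A.1 (H₁ s) - H₂ s‖ := by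
      rw [← map_sub]
      have := A'.1.le_opNorm (A.1 (H₁ s) - H₂ s)
      nlinarith [A'.2, norm_nonneg (A.1 (H₁ s) - H₂ s)]
    have step2 : ‖A.1 (H₁ s) - H₂ s‖ ≤ g A :=
      le_ciSup (dRepr_bddAbove_aux h₁ h₂ A) s
    have step3 : ‖A'.1 (H₂ s) - H₃ s‖ ≤ h A' :=
      le_ciSup (dRepr_bddAbove_aux h₂ h₃ A') s
    calc ‖(A'.1.comp A.1) (H₁ s) - H₃ s‖ = ‖A'.1 (A.1 (H₁ s)) - H₃ s‖ := by
          simp [ContinuousLinearMap.comp_apply]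
      _ ≤ ‖A'.1 (A.1 (H₁ s)) - A'.1 (H₂ s)‖ + ‖A'.1 (H₂ s) - H₃ s‖ := tri
      _ ≤ g A + h A' := add_le_add (le_trans step1 step2) step3
  have step1 : ∀ A', F - h A' ≤ ⨅ A, g A :=
    fun A' => le_ciInf fun A => sub_le_iff_le_add.mpr (main A A')
  have step2 : F - (⨅ A, g A) ≤ ⨅ A', h A' :=
    le_ciInf fun A' => by linarith [step1 A']
  linarith [step2]

lemma dRepr_dec_eq {S X Y : Type*} [NormedAddCommGroup X] [NormedSpace ℝ X]
    [NormedAddCommGroup Y] [NormedSpace ℝ Y]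
    (H₁ : S → X) (H₂ : S → Y) :
    (⨅ B : {B : Y →L[ℝ] X // ‖B‖ ≤ 1}, ⨆ s : S, ‖H₁ s - B.1 (H₂ s)‖) =
      ⨅ A : {A : Y →L[ℝ] X // ‖A‖ ≤ 1}, ⨆ s : S, ‖A.1 (H₂ s) - H₁ s‖ :=
  iInf_congr fun B => iSup_congr fun s => norm_sub_rev _ _

/-- Triangle inequality for representation similarity. -/
theorem dRepr_triangle {S X₁ X₂ X₃ : Type*}
    [NormedAddCommGroup X₁] [NormedSpace ℝ X₁]
    [NormedAddCommGroup X₂] [NormedSpace ℝ X₂]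
    [NormedAddCommGroup X₃] [NormedSpace ℝ X₃]
    (H₁ : S → X₁) (H₂ : S → X₂) (H₃ : S → X₃)
    (hb₁ : ∃ C, ∀ s, ‖H₁ s‖ ≤ C) (hb₂ : ∃ C, ∀ s, ‖H₂ s‖ ≤ C)
    (hb₃ : ∃ C, ∀ s, ‖H₃ s‖ ≤ C) :
    dRepr H₁ H₃ ≤ dRepr H₁ H₂ + dRepr H₂ H₃ := by
  unfold dRepr
  refine max_le ?_ ?_
  · refine le_trans (dRepr_key H₁ H₂ H₃ hb₁ hb₂ hb₃) ?_
    exact add_le_add (le_max_left _ _) (le_max_left _ _)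
  · have key := dRepr_key H₃ H₂ H₁ hb₃ hb₂ hb₁
    rw [← dRepr_dec_eq H₂ H₃, ← dRepr_dec_eq H₁ H₂, ← dRepr_dec_eq H₁ H₃] at key
    refine le_trans key ?_
    have a1 : (⨅ B : {B : X₃ →L[ℝ] X₂ // ‖B‖ ≤ 1}, ⨆ s : S, ‖H₂ s - B.1 (H₃ s)‖) ≤
        max (⨅ A : {A : X₂ →L[ℝ] X₃ // ‖A‖ ≤ 1}, ⨆ s : S, ‖A.1 (H₂ s) - H₃ s‖)
            (⨅ B : {B : X₃ →L[ℝ] X₂ // ‖B‖ ≤ 1}, ⨆ s : S, ‖H₂ s - B.1 (H₃ s)‖) :=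
      le_max_right _ _
    have a2 : (⨅ B : {B : X₂ →L[ℝ] X₁ // ‖B‖ ≤ 1}, ⨆ s : S, ‖H₁ s - B.1 (H₂ s)‖) ≤
        max (⨅ A : {A : X₁ →L[ℝ] X₂ // ‖A‖ ≤ 1}, ⨆ s : S, ‖A.1 (H₁ s) - H₂ s‖)
            (⨅ B : {B : X₂ →L[ℝ] X₁ // ‖B‖ ≤ 1}, ⨆ s : S, ‖H₁ s - B.1 (H₂ s)‖) :=
      le_max_right _ _
    linarith
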